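/- Assume only the block Arnoldi relation A W_j = W_{j+1} H̄_j, where W_{j+1} = [V₁ … V_{j+1}] ∈ ℂ^{n×(j+1)L} has orthonormal columns and F₀ = V₁ S₀ with S₀ upper triangular and invertible (the columns of W_{j+1} need not span block Krylov subspaces, since dependent Arnoldi vectors produced by an earlier breakdown may have been replaced by random orthonormalized vectors), together with the QR setup and CS setup. Suppose H_j is invertible, Ĥ_{jj} = M̂_j Ŷ₂ with M̂_j ∈ ℂ^{L×L} unitary and Ŷ₂ ∈ ℂ^{L×L} upper triangular and invertible, and Q̂_j^{(b)} = M̂_jᴴ; set 𝒬 := M̂_jᴴ 𝒱₁. Then X_j^{(F)} − X_j^{(G)} = W_j·[−R_{j−1}^{−1} Z_j; I_L]·Ŷ₂^{−1} 𝒬 𝒮² 𝒬ᴴ Ĉ_j, where X_j^{(F)} = X₀ + W_j H_j^{−1} E_L^{[jL]} S₀ is the j-th block FOM iterate and X_j^{(G)} = X₀ + W_j Y_j^{(G)} is the j-th block GMRES iterate. -/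

import Mathlib

open Matrix

noncomputable section

set_option maxHeartbeats 1000000

/-- Squared Frobenius norm of a complex matrix. -/
def frobSq {a b : Type*} [Fintype a] [Fintype b] (M : Matrix a b ℂ) : ℝ :=
  ∑ r, ∑ c, Complex.normSq (M r c)

/-- The four Moore–Penrose conditions. -/
def IsMoorePenrose {a b : Type*} [Fintype a] [Fintype b]
    (M : Matrix a b ℂ) (P : Matrix b a ℂ) : Prop :=
  M * P * M = M ∧ P * M * P = P ∧ (M * P)ᴴ = M * P ∧ (P * M)ᴴ = P * M

/-- The block Krylov subspace `𝕂_i(A, F)`: the span of all columns of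
`F, A F, …, A^(i-1) F`. -/
def blockKrylov {n L : ℕ} (A : Matrix (Fin n) (Fin n) ℂ)
    (F : Matrix (Fin n) (Fin L) ℂ) (i : ℕ) : Submodule ℂ (Fin n → ℂ) :=
  Submodule.span ℂ { v | ∃ k < i, ∃ c : Fin L, v = fun r => (A ^ k * F) r c }

/-- `E_L^{[mL]}` : the first `L` columns of the `mL × mL` identity matrix
(block row indexing). -/
def EL (m L : ℕ) : Matrix (Fin m × Fin L) (Fin L) ℂ :=
  Matrix.of fun r c => if (r.1 : ℕ) = 0 ∧ r.2 = c then 1 else 0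

/-- An `L × L` matrix is upper triangular. -/
def utL {L : ℕ} (M : Matrix (Fin L) (Fin L) ℂ) : Prop :=
  ∀ a b : Fin L, (b : ℕ) < (a : ℕ) → M a b = 0

/-- A block-indexed `mL × mL` matrix is upper triangular. -/
def utBig {m L : ℕ} (M : Matrix (Fin m × Fin L) (Fin m × Fin L) ℂ) : Prop :=
  ∀ r c : Fin m × Fin L, (c.1 : ℕ) * L + (c.2 : ℕ) < (r.1 : ℕ) * L + (r.2 : ℕ) → M r c = 0

/-- Stack a block-tall matrix on top of an extra block row. -/
def vcat {m L : ℕ} {col : Type*} (T : Matrix (Fin m × Fin L) col ℂ)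
    (Bo : Matrix (Fin L) col ℂ) : Matrix (Fin (m+1) × Fin L) col ℂ :=
  Matrix.of fun r cc => if h : (r.1 : ℕ) < m then T (⟨r.1, h⟩, r.2) cc else Bo r.2 cc

/-- The block matrix `[[R, Z], [0, N]]`. -/
def twoBlock {m L : ℕ} (R : Matrix (Fin m × Fin L) (Fin m × Fin L) ℂ)
    (Z : Matrix (Fin m × Fin L) (Fin L) ℂ) (N : Matrix (Fin L) (Fin L) ℂ) :
    Matrix (Fin (m+1) × Fin L) (Fin (m+1) × Fin L) ℂ :=
  Matrix.of fun r c =>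
    if hr : (r.1 : ℕ) < m then
      if hc : (c.1 : ℕ) < m then R (⟨r.1, hr⟩, r.2) (⟨c.1, hc⟩, c.2)
      else Z (⟨r.1, hr⟩, r.2) c.2
    else
      if (c.1 : ℕ) < m then 0 else N r.2 c.2

/-- The block matrix `[[R, Z], [0, Hmid], [0, Hbot]]`. -/
def threeBlock {m L : ℕ} (R : Matrix (Fin m × Fin L) (Fin m × Fin L) ℂ)
    (Z : Matrix (Fin m × Fin L) (Fin L) ℂ) (Hmid Hbot : Matrix (Fin L) (Fin L) ℂ) :
    Matrix (Fin (m+2) × Fin L) (Fin (m+1) × Fin L) ℂ :=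
  Matrix.of fun r c =>
    if hr : (r.1 : ℕ) < m then
      if hc : (c.1 : ℕ) < m then R (⟨r.1, hr⟩, r.2) (⟨c.1, hc⟩, c.2)
      else Z (⟨r.1, hr⟩, r.2) c.2
    else
      if (c.1 : ℕ) < m then 0
      else if (r.1 : ℕ) = m then Hmid r.2 c.2 else Hbot r.2 c.2

/-- `diag(Q, I_L)` : extend a block-indexed square matrix by an identity block. -/
def extendOne {m L : ℕ} (Q : Matrix (Fin m × Fin L) (Fin m × Fin L) ℂ) :
    Matrix (Fin (m+1) × Fin L) (Fin (m+1) × Fin L) ℂ :=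
  Matrix.of fun r c =>
    if hr : (r.1 : ℕ) < m then
      if hc : (c.1 : ℕ) < m then Q (⟨r.1, hr⟩, r.2) (⟨c.1, hc⟩, c.2) else 0
    else
      if (c.1 : ℕ) < m then 0 else if r.2 = c.2 then 1 else 0

/-- `diag(I_{mL}, Q)` : an identity block, then `Q` in the bottom right corner. -/
def extendBot {m L : ℕ} (Q : Matrix (Fin L) (Fin L) ℂ) :
    Matrix (Fin (m+1) × Fin L) (Fin (m+1) × Fin L) ℂ :=
  Matrix.of fun r c =>
    if (r.1 : ℕ) < m ∨ (c.1 : ℕ) < m then (if r = c then 1 else 0)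
    else Q r.2 c.2

/-- The `(m+2)L × (m+2)L` matrix which is the identity outside of its trailing
principal `2L × 2L` block, which is `[[Q11, Q12], [Q21, Q22]]`. -/
def trailingTwo {m L : ℕ} (Q11 Q12 Q21 Q22 : Matrix (Fin L) (Fin L) ℂ) :
    Matrix (Fin (m+2) × Fin L) (Fin (m+2) × Fin L) ℂ :=
  Matrix.of fun r c =>
    if (r.1 : ℕ) < m ∨ (c.1 : ℕ) < m then (if r = c then 1 else 0)
    else if (r.1 : ℕ) = m then
      (if (c.1 : ℕ) = m then Q11 r.2 c.2 else Q12 r.2 c.2)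
    else
      (if (c.1 : ℕ) = m then Q21 r.2 c.2 else Q22 r.2 c.2)

/-- The block matrix `[R ; 0]` (one extra zero block row below `R`). -/
def stackZero {m L : ℕ} (R : Matrix (Fin m × Fin L) (Fin m × Fin L) ℂ) :
    Matrix (Fin (m+1) × Fin L) (Fin m × Fin L) ℂ :=
  Matrix.of fun r c => if h : (r.1 : ℕ) < m then R (⟨r.1, h⟩, r.2) c else 0

/-- A breakdown-free block Arnoldi decomposition of length `j = p + 1` for the block
linear system `A X = B` with initial guess `X₀` (block size `L`). -/
structure BlockArnoldi (n L p : ℕ) : Type where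
  A : Matrix (Fin n) (Fin n) ℂ
  B : Matrix (Fin n) (Fin L) ℂ
  X0 : Matrix (Fin n) (Fin L) ℂ
  W : Matrix (Fin n) (Fin (p+2) × Fin L) ℂ
  S0 : Matrix (Fin L) (Fin L) ℂ
  Hbar : Matrix (Fin (p+2) × Fin L) (Fin (p+1) × Fin L) ℂ
  hL : 1 ≤ L
  hn : (p+2) * L ≤ n
  F0_rank : (B - A * X0).rank = L
  orth : Wᴴ * W = 1
  S0_ut : utL S0
  S0_inv : IsUnit S0
  F0_eq : B - A * X0 = (W.submatrix id fun c : Fin L => ((0 : Fin (p+2)), c)) * S0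
  span : ∀ i : ℕ, i ≤ p + 2 →
    blockKrylov A (B - A * X0) i =
      Submodule.span ℂ { v | ∃ c : Fin (p+2) × Fin L, (c.1 : ℕ) < i ∧ v = fun r => W r c }
  arnoldi : A * W.submatrix id (Prod.map Fin.castSucc id) = W * Hbar
  hess : ∀ r c, (c.1 : ℕ) + 1 < (r.1 : ℕ) → Hbar r c = 0
  sub_ut : ∀ (k : Fin (p+1)) (a b : Fin L), (b : ℕ) < (a : ℕ) → Hbar (k.succ, a) (k, b) = 0
  sub_inv : ∀ k : Fin (p+1), IsUnit (Matrix.of fun a b : Fin L => Hbar (k.succ, a) (k, b))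

namespace BlockArnoldi

variable {n L p : ℕ}

/-- `H̄_{j-1}`, the leading `jL × (j-1)L` submatrix of `H̄_j`. -/
def Hprev (D : BlockArnoldi n L p) : Matrix (Fin (p+1) × Fin L) (Fin p × Fin L) ℂ :=
  D.Hbar.submatrix (Prod.map Fin.castSucc id) (Prod.map Fin.castSucc id)

/-- `H_j`, the leading `jL × jL` submatrix of `H̄_j`. -/
def Hsq (D : BlockArnoldi n L p) : Matrix (Fin (p+1) × Fin L) (Fin (p+1) × Fin L) ℂ :=
  D.Hbar.submatrix (Prod.map Fin.castSucc id) id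

/-- `W_j = [V₁ … V_j]`. -/
def Wfull (D : BlockArnoldi n L p) : Matrix (Fin n) (Fin (p+1) × Fin L) ℂ :=
  D.W.submatrix id (Prod.map Fin.castSucc id)

/-- `W_{j-1} = [V₁ … V_{j-1}]`. -/
def Wprev (D : BlockArnoldi n L p) : Matrix (Fin n) (Fin p × Fin L) ℂ :=
  D.W.submatrix id (Prod.map (fun i : Fin p => (i.castSucc.castSucc : Fin (p+2))) id)

/-- `V_j`, the `j`-th block Arnoldi vector. -/
def Vj (D : BlockArnoldi n L p) : Matrix (Fin n) (Fin L) ℂ :=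
  D.W.submatrix id fun c : Fin L => (((Fin.last p).castSucc : Fin (p+2)), c)

end BlockArnoldi

/-- `Y` is the unique minimizer of `‖Hb • Y' - T‖_F` over all `Y'`. -/
def IsUniqueFrobMin {a b c : Type*} [Fintype a] [Fintype b] [Fintype c]
    (Hb : Matrix a b ℂ) (T : Matrix a c ℂ) (Y : Matrix b c ℂ) : Prop :=
  (∀ Y', frobSq (Hb * Y - T) ≤ frobSq (Hb * Y' - T)) ∧
  ∀ Y', (∀ Y'', frobSq (Hb * Y' - T) ≤ frobSq (Hb * Y'' - T)) → Y' = Y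

/-- `Y_j^{(G)}` is the solution of the `j`-th block GMRES least-squares subproblem. -/
def IsBlockGMRESj {n L p : ℕ} (D : BlockArnoldi n L p)
    (Y : Matrix (Fin (p+1) × Fin L) (Fin L) ℂ) : Prop :=
  IsUniqueFrobMin D.Hbar (EL (p+2) L * D.S0) Y

/-- `Y_{j-1}^{(G)}` is the solution of the `(j-1)`-st block GMRES least-squares
subproblem. -/
def IsBlockGMRESprev {n L p : ℕ} (D : BlockArnoldi n L p)
    (Y : Matrix (Fin p × Fin L) (Fin L) ℂ) : Prop :=
  IsUniqueFrobMin D.Hprev (EL (p+1) L * D.S0) Y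

/-- The QR setup at step `j = p+1` : a QR factorization `Q̄_{j-1} H̄_{j-1} = [R_{j-1}; 0]`
from the previous step, the induced splitting
`diag(Q̄_{j-1}, I_L)·H̄_j = [[R,Z],[0,Ĥ_{jj}],[0,H_{j+1,j}]]`, the unitary `Q_j`
(identity outside its trailing principal `2L×2L` block) completing the
QR factorization of `H̄_j`, and the unitary `Q̂_j^{(b)}` triangularizing `Ĥ_{jj}`. -/
structure QRSetup (L p : ℕ) (Hbar : Matrix (Fin (p+2) × Fin L) (Fin (p+1) × Fin L) ℂ)
    (S0 : Matrix (Fin L) (Fin L) ℂ) : Type where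
  Qbar : Matrix (Fin (p+1) × Fin L) (Fin (p+1) × Fin L) ℂ
  R : Matrix (Fin p × Fin L) (Fin p × Fin L) ℂ
  Z : Matrix (Fin p × Fin L) (Fin L) ℂ
  Hhat : Matrix (Fin L) (Fin L) ℂ
  Hsub : Matrix (Fin L) (Fin L) ℂ
  Q11 : Matrix (Fin L) (Fin L) ℂ
  Q12 : Matrix (Fin L) (Fin L) ℂ
  Q21 : Matrix (Fin L) (Fin L) ℂ
  Q22 : Matrix (Fin L) (Fin L) ℂ
  N : Matrix (Fin L) (Fin L) ℂ
  Qhatb : Matrix (Fin L) (Fin L) ℂ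
  Nhat : Matrix (Fin L) (Fin L) ℂ
  Qbar_unit : Qbarᴴ * Qbar = 1
  Qbar_base : p = 0 → Qbar = 1
  R_ut : utBig R
  R_inv : IsUnit R
  qr_prev : Qbar * Hbar.submatrix (Prod.map Fin.castSucc id) (Prod.map Fin.castSucc id)
      = stackZero R
  qr_split : extendOne Qbar * Hbar = threeBlock R Z Hhat Hsub
  Qj_unit : (trailingTwo (m := p) Q11 Q12 Q21 Q22)ᴴ * trailingTwo (m := p) Q11 Q12 Q21 Q22 = 1
  qr_full : trailingTwo (m := p) Q11 Q12 Q21 Q22 * (extendOne Qbar * Hbar)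
      = threeBlock R Z N 0
  N_ut : utL N
  N_inv : IsUnit N
  Qhatb_unit : Qhatbᴴ * Qhatb = 1
  Nhat_def : Nhat = Qhatb * Hhat
  Nhat_ut : utL Nhat

namespace QRSetup

variable {L p : ℕ} {Hbar : Matrix (Fin (p+2) × Fin L) (Fin (p+1) × Fin L) ℂ}
  {S0 : Matrix (Fin L) (Fin L) ℂ}

/-- `C̃_j` : the last `L` rows of `Q̄_{j-1} E_L^{[jL]} S₀`. -/
def Ct (S : QRSetup L p Hbar S0) : Matrix (Fin L) (Fin L) ℂ :=
  Matrix.of fun a b => (S.Qbar * (EL (p+1) L * S0)) ((Fin.last p), a) b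

/-- `C_j := Q_j^{(11)} C̃_j`. -/
def C (S : QRSetup L p Hbar S0) : Matrix (Fin L) (Fin L) ℂ := S.Q11 * S.Ct

/-- `Ĉ_j := Q̂_j^{(b)} C̃_j`. -/
def Chat (S : QRSetup L p Hbar S0) : Matrix (Fin L) (Fin L) ℂ := S.Qhatb * S.Ct

end QRSetup

namespace Stmt17Aux

variable {m L : ℕ} {col : Type*} [Fintype col]

def eqv (m L : ℕ) : ((Fin m × Fin L) ⊕ Fin L) ≃ (Fin (m+1) × Fin L) where
  toFun x := match x with
    | .inl s => (s.1.castSucc, s.2)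
    | .inr a => (Fin.last m, a)
  invFun r := if h : (r.1 : ℕ) < m then .inl (⟨r.1, h⟩, r.2) else .inr r.2
  left_inv x := by
    rcases x with ⟨i, a⟩ | a
    · simp only []
      rw [dif_pos (show ((i.castSucc : Fin (m+1)) : ℕ) < m from i.isLt)]
      simp [Fin.ext_iff]
    · simp only []
      rw [dif_neg (by simp)]
  right_inv r := by
    rcases r with ⟨r1, r2⟩
    by_cases h : (r1 : ℕ) < m
    · simp only [dif_pos h]
      ext <;> simp
    · simp only [dif_neg h]
      have : r1 = Fin.last m := by
        ext; simp only [Fin.val_last]; omega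
      rw [this]

@[simp] lemma eqv_inl (s : Fin m × Fin L) : eqv m L (.inl s) = (s.1.castSucc, s.2) := rfl
@[simp] lemma eqv_inr (a : Fin L) : eqv m L (.inr a) = (Fin.last m, a) := rfl

@[simp] lemma mk_castSucc (i : Fin m) (h : ((i.castSucc : Fin (m+1)) : ℕ) < m) :
    (⟨((i.castSucc : Fin (m+1)) : ℕ), h⟩ : Fin m) = i := by ext; simp

lemma eqv_symm_castSucc (i : Fin m) (a : Fin L) :
    (eqv m L).symm (i.castSucc, a) = .inl (i, a) := by
  rw [Equiv.symm_apply_eq]; rfl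

lemma eqv_symm_last (a : Fin L) : (eqv m L).symm (Fin.last m, a) = .inr a := by
  rw [Equiv.symm_apply_eq]; rfl

def e3 (m L : ℕ) : ((Fin m × Fin L) ⊕ (Fin L ⊕ Fin L)) ≃ (Fin (m+2) × Fin L) :=
  (Equiv.sumAssoc _ _ _).symm.trans
    (((eqv m L).sumCongr (Equiv.refl (Fin L))).trans (eqv (m+1) L))

@[simp] lemma e3_inl (s : Fin m × Fin L) :
    e3 m L (.inl s) = (s.1.castSucc.castSucc, s.2) := rfl
@[simp] lemma e3_inr_inl (a : Fin L) :
    e3 m L (.inr (.inl a)) = ((Fin.last m).castSucc, a) := rfl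
@[simp] lemma e3_inr_inr (a : Fin L) :
    e3 m L (.inr (.inr a)) = (Fin.last (m+1), a) := rfl

def topR (M : Matrix (Fin (m+1) × Fin L) col ℂ) : Matrix (Fin m × Fin L) col ℂ :=
  M.submatrix (Prod.map Fin.castSucc id) id

def botR (M : Matrix (Fin (m+1) × Fin L) col ℂ) : Matrix (Fin L) col ℂ :=
  M.submatrix (fun a => (Fin.last m, a)) id

lemma submatrix_eqv (M : Matrix (Fin (m+1) × Fin L) col ℂ) :
    M.submatrix (eqv m L) id = fromRows (topR M) (botR M) := by
  ext x c
  rcases x with s | a <;> rfl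

lemma moveL {row row' : Type*} (e : row' ≃ row) {M : Matrix row col ℂ}
    {N : Matrix row' col ℂ} (h : M.submatrix e id = N) :
    M = N.submatrix e.symm id := by
  subst h
  rw [Matrix.submatrix_submatrix, Equiv.self_comp_symm]
  simp

lemma moveLR {row row' col1 col1' : Type*} (e : row' ≃ row) (f : col1' ≃ col1)
    {M : Matrix row col1 ℂ} {N : Matrix row' col1' ℂ} (h : M.submatrix e f = N) :
    M = N.submatrix e.symm f.symm := by
  subst h
  rw [Matrix.submatrix_submatrix, Equiv.self_comp_symm, Equiv.self_comp_symm,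
    Matrix.submatrix_id_id]

lemma eq_vcat (M : Matrix (Fin (m+1) × Fin L) col ℂ) :
    M = vcat (topR M) (botR M) := by
  ext ⟨r1, r2⟩ c
  by_cases h : (r1 : ℕ) < m
  · have h1 : (⟨(r1 : ℕ), h⟩ : Fin m).castSucc = r1 := by ext; simp
    simp only [vcat, of_apply, dif_pos h, topR, submatrix_apply]
    rw [show Prod.map Fin.castSucc id ((⟨(r1 : ℕ), h⟩ : Fin m), r2)
        = ((⟨(r1 : ℕ), h⟩ : Fin m).castSucc, r2) from rfl, h1]
    rfl
  · have h1 : r1 = Fin.last m := by ext; simp only [Fin.val_last]; omega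
    simp only [vcat, of_apply, dif_neg h, botR, submatrix_apply, id]
    rw [h1]

lemma vcat_eqv (T : Matrix (Fin m × Fin L) col ℂ) (Bo : Matrix (Fin L) col ℂ) :
    (vcat T Bo).submatrix (eqv m L) id = fromRows T Bo := by
  ext x c
  rcases x with ⟨i, a⟩ | a
  · simp only [submatrix_apply, eqv_inl, fromRows, of_apply, Sum.elim_inl, vcat]
    rw [dif_pos (show ((i.castSucc : Fin (m+1)) : ℕ) < m from i.isLt)]
    simp
    rfl
  · simp only [submatrix_apply, eqv_inr, fromRows, of_apply, Sum.elim_inr, vcat]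
    rw [dif_neg (by simp)]
    rfl

lemma vcat_eq (T : Matrix (Fin m × Fin L) col ℂ) (Bo : Matrix (Fin L) col ℂ) :
    vcat T Bo = (fromRows T Bo).submatrix (eqv m L).symm id :=
  moveL _ (vcat_eqv T Bo)

lemma twoBlock_eqv (R : Matrix (Fin m × Fin L) (Fin m × Fin L) ℂ)
    (Z : Matrix (Fin m × Fin L) (Fin L) ℂ) (N : Matrix (Fin L) (Fin L) ℂ) :
    (twoBlock R Z N).submatrix (eqv m L) (eqv m L) = fromBlocks R Z 0 N := by
  ext x y
  rcases x with ⟨i, a⟩ | a <;> rcases y with ⟨i', a'⟩ | a' <;>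
    simp only [submatrix_apply, eqv_inl, eqv_inr, twoBlock, of_apply, fromBlocks,
      Sum.elim_inl, Sum.elim_inr]
  · rw [dif_pos (show ((i.castSucc : Fin (m+1)) : ℕ) < m from i.isLt),
      dif_pos (show ((i'.castSucc : Fin (m+1)) : ℕ) < m from i'.isLt)]
    simp
  · rw [dif_pos (show ((i.castSucc : Fin (m+1)) : ℕ) < m from i.isLt),
      dif_neg (by simp)]
    simp
  · rw [dif_neg (by simp), if_pos (show ((i'.castSucc : Fin (m+1)) : ℕ) < m from i'.isLt)]
    rfl
  · rw [dif_neg (by simp), if_neg (by simp)]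

lemma stackZero_eqv (R : Matrix (Fin m × Fin L) (Fin m × Fin L) ℂ) :
    (stackZero R).submatrix (eqv m L) id = fromRows R 0 := by
  ext x y
  rcases x with ⟨i, a⟩ | a <;>
    simp only [submatrix_apply, eqv_inl, eqv_inr, stackZero, of_apply, fromRows,
      Sum.elim_inl, Sum.elim_inr]
  · rw [dif_pos (show ((i.castSucc : Fin (m+1)) : ℕ) < m from i.isLt)]
    simp
    rfl
  · rw [dif_neg (by simp)]
    rfl

lemma extendOne_eqv (Q : Matrix (Fin m × Fin L) (Fin m × Fin L) ℂ) :
    (extendOne Q).submatrix (eqv m L) (eqv m L) = fromBlocks Q 0 0 1 := by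
  ext x y
  rcases x with ⟨i, a⟩ | a <;> rcases y with ⟨i', a'⟩ | a' <;>
    simp only [submatrix_apply, eqv_inl, eqv_inr, extendOne, of_apply, fromBlocks,
      Sum.elim_inl, Sum.elim_inr]
  · rw [dif_pos (show ((i.castSucc : Fin (m+1)) : ℕ) < m from i.isLt),
      dif_pos (show ((i'.castSucc : Fin (m+1)) : ℕ) < m from i'.isLt)]
    simp
  · rw [dif_pos (show ((i.castSucc : Fin (m+1)) : ℕ) < m from i.isLt),
      dif_neg (by simp)]
    simp
  · rw [dif_neg (by simp), if_pos (show ((i'.castSucc : Fin (m+1)) : ℕ) < m from i'.isLt)]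
    rfl
  · rw [dif_neg (by simp), if_neg (by simp), Matrix.one_apply]

lemma threeBlock_eqv (R : Matrix (Fin m × Fin L) (Fin m × Fin L) ℂ)
    (Z : Matrix (Fin m × Fin L) (Fin L) ℂ) (Hm Hb : Matrix (Fin L) (Fin L) ℂ) :
    (threeBlock R Z Hm Hb).submatrix (e3 m L) (eqv m L)
      = fromBlocks R Z 0 (fromRows Hm Hb) := by
  ext x y
  rcases x with ⟨i, a⟩ | (a | a) <;> rcases y with ⟨i', a'⟩ | a' <;>
    simp only [submatrix_apply, e3_inl, e3_inr_inl, e3_inr_inr, eqv_inl, eqv_inr,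
      threeBlock, of_apply, fromBlocks, fromRows, Sum.elim_inl, Sum.elim_inr]
  · rw [dif_pos (show ((i.castSucc.castSucc : Fin (m+2)) : ℕ) < m from i.isLt),
      dif_pos (show ((i'.castSucc : Fin (m+1)) : ℕ) < m from i'.isLt)]
    simp
  · rw [dif_pos (show ((i.castSucc.castSucc : Fin (m+2)) : ℕ) < m from i.isLt),
      dif_neg (by simp)]
    simp
  · rw [dif_neg (by simp), if_pos (show ((i'.castSucc : Fin (m+1)) : ℕ) < m from i'.isLt)]
    rfl
  · rw [dif_neg (by simp), if_neg (by simp), if_pos (by simp)]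
    rfl
  · rw [dif_neg (by simp), if_pos (show ((i'.castSucc : Fin (m+1)) : ℕ) < m from i'.isLt)]
    rfl
  · rw [dif_neg (by simp), if_neg (by simp), if_neg (by simp)]
    rfl

lemma trailingTwo_eqv (Q11 Q12 Q21 Q22 : Matrix (Fin L) (Fin L) ℂ) :
    (trailingTwo (m := m) Q11 Q12 Q21 Q22).submatrix (e3 m L) (e3 m L)
      = fromBlocks 1 0 0 (fromBlocks Q11 Q12 Q21 Q22) := by
  ext x y
  rcases x with ⟨i, a⟩ | (a | a) <;> rcases y with ⟨i', a'⟩ | (a' | a') <;>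
    simp only [submatrix_apply, e3_inl, e3_inr_inl, e3_inr_inr,
      trailingTwo, of_apply, fromBlocks, fromRows, Sum.elim_inl, Sum.elim_inr]
  · rw [if_pos (Or.inl (show ((i.castSucc.castSucc : Fin (m+2)) : ℕ) < m from i.isLt)),
      Matrix.one_apply]
    congr 1
    simp [Prod.ext_iff, Fin.ext_iff]
  · rw [if_pos (Or.inl (show ((i.castSucc.castSucc : Fin (m+2)) : ℕ) < m from i.isLt)),
      if_neg (by simp [Prod.ext_iff, Fin.ext_iff]; omega)]
    simp
  · rw [if_pos (Or.inl (show ((i.castSucc.castSucc : Fin (m+2)) : ℕ) < m from i.isLt)),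
      if_neg (by simp [Prod.ext_iff, Fin.ext_iff]; omega)]
    simp
  · rw [if_pos (Or.inr (show ((i'.castSucc.castSucc : Fin (m+2)) : ℕ) < m from i'.isLt)),
      if_neg (by simp [Prod.ext_iff, Fin.ext_iff]; omega)]
    simp
  · rw [if_neg (by simp), if_pos (by simp), if_pos (by simp)]
  · rw [if_neg (by simp), if_pos (by simp), if_neg (by simp)]
  · rw [if_pos (Or.inr (show ((i'.castSucc.castSucc : Fin (m+2)) : ℕ) < m from i'.isLt)),
      if_neg (by simp [Prod.ext_iff, Fin.ext_iff]; omega)]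
    simp
  · rw [if_neg (by simp), if_neg (by simp), if_pos (by simp)]
  · rw [if_neg (by simp), if_neg (by simp), if_neg (by simp)]

lemma threeBlock_zero (R : Matrix (Fin m × Fin L) (Fin m × Fin L) ℂ)
    (Z : Matrix (Fin m × Fin L) (Fin L) ℂ) (N : Matrix (Fin L) (Fin L) ℂ) :
    threeBlock R Z N 0 = stackZero (twoBlock R Z N) := by
  ext ⟨r1, r2⟩ ⟨c1, c2⟩
  simp only [threeBlock, stackZero, twoBlock, of_apply]
  by_cases hr : (r1 : ℕ) < m
  · have hr' : (r1 : ℕ) < m + 1 := by omega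
    rw [dif_pos hr, dif_pos hr', dif_pos hr]
  · rw [dif_neg hr]
    by_cases hr' : (r1 : ℕ) < m + 1
    · rw [dif_pos hr', dif_neg hr]
      have hm : (r1 : ℕ) = m := by omega
      by_cases hc : (c1 : ℕ) < m
      · rw [if_pos hc, if_pos hc]
      · rw [if_neg hc, if_neg hc, if_pos hm]
    · rw [dif_neg hr']
      by_cases hc : (c1 : ℕ) < m
      · rw [if_pos hc]
      · rw [if_neg hc, if_neg (by omega : ¬ (r1 : ℕ) = m)]
        rfl

lemma fb_mul_fr {l o p q : Type*} [Fintype l] [Fintype o]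
    (A : Matrix p l ℂ) (B : Matrix p o ℂ) (C : Matrix q l ℂ) (D : Matrix q o ℂ)
    (X : Matrix l col ℂ) (Y : Matrix o col ℂ) :
    fromBlocks A B C D * fromRows X Y = fromRows (A * X + B * Y) (C * X + D * Y) := by
  ext x c
  rcases x with r | r <;>
    simp [Matrix.mul_apply, fromBlocks, Fintype.sum_sum_type, Finset.sum_add_distrib]

lemma submatrix_rows_mul {row row' k : Type*} [Fintype k]
    (M : Matrix row k ℂ) (Y : Matrix k col ℂ) (f : row' → row) :
    (M.submatrix f id) * Y = (M * Y).submatrix f id := by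
  ext r c
  simp [Matrix.mul_apply]

lemma vcat_mul {k : Type*} [Fintype k] (T : Matrix (Fin m × Fin L) k ℂ)
    (Bo : Matrix (Fin L) k ℂ) (M : Matrix k col ℂ) :
    vcat T Bo * M = vcat (T * M) (Bo * M) := by
  rw [vcat_eq, submatrix_rows_mul, fromRows_mul, ← vcat_eq]

lemma vcat_sub (T T' : Matrix (Fin m × Fin L) col ℂ) (Bo Bo' : Matrix (Fin L) col ℂ) :
    vcat T Bo - vcat T' Bo' = vcat (T - T') (Bo - Bo') := by
  ext ⟨r1, r2⟩ c
  simp only [Matrix.sub_apply, vcat, of_apply]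
  split_ifs <;> simp

lemma twoBlock_mul_vcat (R : Matrix (Fin m × Fin L) (Fin m × Fin L) ℂ)
    (Z : Matrix (Fin m × Fin L) (Fin L) ℂ) (N : Matrix (Fin L) (Fin L) ℂ)
    (Xt : Matrix (Fin m × Fin L) col ℂ) (Xb : Matrix (Fin L) col ℂ) :
    twoBlock R Z N * vcat Xt Xb = vcat (R * Xt + Z * Xb) (N * Xb) := by
  have h2 : twoBlock R Z N = (fromBlocks R Z 0 N).submatrix (eqv m L).symm (eqv m L).symm :=
    moveLR _ _ (twoBlock_eqv R Z N)
  rw [h2, vcat_eq, Matrix.submatrix_mul_equiv (e₂ := (eqv m L).symm),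
    fb_mul_fr, ← vcat_eq]
  rw [Matrix.zero_mul, zero_add]

lemma topR_sub (A B : Matrix (Fin (m+1) × Fin L) col ℂ) :
    topR (A - B) = topR A - topR B := rfl

lemma botR_sub (A B : Matrix (Fin (m+1) × Fin L) col ℂ) :
    botR (A - B) = botR A - botR B := rfl

lemma topR_fromRows (A : Matrix (Fin m × Fin L) col ℂ) (B : Matrix (Fin L) col ℂ) :
    topR ((fromRows A B).submatrix (eqv m L).symm id) = A := by
  ext r c
  simp only [topR, submatrix_apply, Prod.map, id]
  rw [show ((r.1.castSucc, r.2) : Fin (m+1) × Fin L) = ((r.1.castSucc, r.2)) from rfl,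
    eqv_symm_castSucc]
  rfl

lemma botR_fromRows (A : Matrix (Fin m × Fin L) col ℂ) (B : Matrix (Fin L) col ℂ) :
    botR ((fromRows A B).submatrix (eqv m L).symm id) = B := by
  ext r c
  simp only [botR, submatrix_apply, id]
  rw [eqv_symm_last]
  rfl

-- frobSq lemmas
lemma frobSq_nonneg {a b : Type*} [Fintype a] [Fintype b] (M : Matrix a b ℂ) :
    0 ≤ frobSq M := by
  apply Finset.sum_nonneg
  intro r _
  apply Finset.sum_nonneg
  intro c _
  exact Complex.normSq_nonneg _

@[simp] lemma frobSq_zero {a b : Type*} [Fintype a] [Fintype b] :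
    frobSq (0 : Matrix a b ℂ) = 0 := by simp [frobSq]

lemma frobSq_neg {a b : Type*} [Fintype a] [Fintype b] (M : Matrix a b ℂ) :
    frobSq (-M) = frobSq M := by simp [frobSq]

lemma frobSq_eq_trace {a b : Type*} [Fintype a] [Fintype b] (M : Matrix a b ℂ) :
    frobSq M = (Matrix.trace (Mᴴ * M)).re := by
  rw [Matrix.trace]
  rw [Complex.re_sum]
  rw [frobSq, Finset.sum_comm]
  apply Finset.sum_congr rfl
  intro c _
  rw [Matrix.diag_apply, Matrix.mul_apply, Complex.re_sum]
  apply Finset.sum_congr rfl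
  intro r _
  rw [Matrix.conjTranspose_apply, Complex.star_def, ← Complex.normSq_eq_conj_mul_self,
    Complex.ofReal_re]

lemma frobSq_unitary {a b : Type*} [Fintype a] [Fintype b] [DecidableEq a]
    (G : Matrix a a ℂ) (hG : Gᴴ * G = 1) (M : Matrix a b ℂ) :
    frobSq (G * M) = frobSq M := by
  rw [frobSq_eq_trace, frobSq_eq_trace, Matrix.conjTranspose_mul, Matrix.mul_assoc,
    ← Matrix.mul_assoc Gᴴ, hG, Matrix.one_mul]

lemma frobSq_split (M : Matrix (Fin (m+1) × Fin L) col ℂ) :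
    frobSq M = frobSq (topR M) + frobSq (botR M) := by
  rw [frobSq, ← Equiv.sum_comp (eqv m L) (fun r => ∑ c, Complex.normSq (M r c)),
    Fintype.sum_sum_type]
  rfl

lemma cancel_left {k : Type*} [Fintype k] [DecidableEq k] {c : Type*} [Fintype c]
    {A B : Matrix k k ℂ} (h : A * B = 1) (X : Matrix k c ℂ) : A * (B * X) = X := by
  rw [← Matrix.mul_assoc, h, Matrix.one_mul]

lemma lcancel {k : Type*} [Fintype k] [DecidableEq k] {c : Type*} [Fintype c]
    {A : Matrix k k ℂ} (h : Aᴴ * A = 1) {X Y : Matrix k c ℂ}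
    (hXY : A * X = A * Y) : X = Y := by
  have := congrArg (fun M => Aᴴ * M) hXY
  simpa [cancel_left h] using this

lemma ELS0_apply {p : ℕ} (S0 : Matrix (Fin L) (Fin L) ℂ) (r : Fin p × Fin L) (c : Fin L) :
    (EL p L * S0) r c = if (r.1 : ℕ) = 0 then S0 r.2 c else 0 := by
  simp only [Matrix.mul_apply, EL, of_apply, ite_and, ite_mul, one_mul, zero_mul]
  by_cases h : (r.1 : ℕ) = 0
  · simp [h]
  · simp [h]


lemma isUnit_of_mul_one {k : Type*} [Fintype k] [DecidableEq k] {A B : Matrix k k ℂ}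
    (h : A * B = 1) : IsUnit A :=
  (Matrix.isUnit_iff_isUnit_det A).mpr (Matrix.isUnit_det_of_right_inverse h)

lemma unmoveL {row row' : Type*} (e : row' ≃ row) (N : Matrix row' col ℂ) :
    (N.submatrix (e.symm : row → row') id).submatrix e id = N := by
  rw [Matrix.submatrix_submatrix, Equiv.symm_comp_self]
  simp

lemma e3_symm_inl (i : Fin m) (a : Fin L) :
    (e3 m L).symm (i.castSucc.castSucc, a) = .inl (i, a) := by
  rw [Equiv.symm_apply_eq]; rfl

lemma e3_symm_mid (a : Fin L) :
    (e3 m L).symm ((Fin.last m).castSucc, a) = .inr (.inl a) := by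
  rw [Equiv.symm_apply_eq]; rfl

lemma e3_symm_bot (a : Fin L) :
    (e3 m L).symm (Fin.last (m+1), a) = .inr (.inr a) := by
  rw [Equiv.symm_apply_eq]; rfl

lemma topR_threeBlock (R : Matrix (Fin m × Fin L) (Fin m × Fin L) ℂ)
    (Z : Matrix (Fin m × Fin L) (Fin L) ℂ) (Hm Hb : Matrix (Fin L) (Fin L) ℂ) :
    topR (threeBlock R Z Hm Hb) = twoBlock R Z Hm := by
  ext ⟨r1, r2⟩ ⟨c1, c2⟩
  simp only [topR, submatrix_apply, threeBlock, twoBlock, of_apply, Prod.map_fst,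
    Prod.map_snd, id_eq, id]
  by_cases hr : (r1 : ℕ) < m
  · rw [dif_pos (show ((r1.castSucc : Fin (m+2)) : ℕ) < m by simpa using hr), dif_pos hr]
    by_cases hc : (c1 : ℕ) < m
    · rw [dif_pos hc, dif_pos hc]
      simp
    · rw [dif_neg hc, dif_neg hc]
      simp
  · rw [dif_neg (show ¬ ((r1.castSucc : Fin (m+2)) : ℕ) < m by simpa using hr), dif_neg hr]
    by_cases hc : (c1 : ℕ) < m
    · rw [if_pos hc, if_pos hc]
    · rw [if_neg hc, if_neg hc,
        if_pos (show ((r1.castSucc : Fin (m+2)) : ℕ) = m by simp; omega)]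


end Stmt17Aux

open Stmt17Aux

/-- (Valid also after block Arnoldi breakdown with replacement of
dependent basis vectors.)  Assuming only the block Arnoldi relation
`A W_j = W_{j+1} H̄_j` (`W_{j+1}` with orthonormal columns, `F₀ = V₁ S₀`), the QR and
CS setups, `H_j` invertible, `Ĥ_{jj} = M̂_j Ŷ₂` with `M̂_j` unitary and `Ŷ₂` upper
triangular invertible and `Q̂_j^(b) = M̂_jᴴ`, one has
`X_j^(F) - X_j^(G) = W_j [−R_{j-1}⁻¹ Z_j; I_L] Ŷ₂⁻¹ 𝒬 𝒮² 𝒬ᴴ Ĉ_j` with `𝒬 = M̂_jᴴ 𝒱₁`. -/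
theorem stmt17 {n L p : ℕ} (hL : 1 ≤ L) (hn : (p+2) * L ≤ n)
    (A : Matrix (Fin n) (Fin n) ℂ) (B X0 : Matrix (Fin n) (Fin L) ℂ)
    (W : Matrix (Fin n) (Fin (p+2) × Fin L) ℂ)
    (S0 : Matrix (Fin L) (Fin L) ℂ)
    (Hbar : Matrix (Fin (p+2) × Fin L) (Fin (p+1) × Fin L) ℂ)
    (horth : Wᴴ * W = 1)
    (hS0_ut : utL S0) (hS0_inv : IsUnit S0)
    (hF0 : B - A * X0 = (W.submatrix id fun c : Fin L => ((0 : Fin (p+2)), c)) * S0)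
    (harnoldi : A * W.submatrix id (Prod.map Fin.castSucc id) = W * Hbar)
    (hhess : ∀ r c, (c.1 : ℕ) + 1 < (r.1 : ℕ) → Hbar r c = 0)
    (S : QRSetup L p Hbar S0)
    (Yj : Matrix (Fin (p+1) × Fin L) (Fin L) ℂ)
    (hYj : IsUniqueFrobMin Hbar (EL (p+2) L * S0) Yj)
    (hHinv : IsUnit (Hbar.submatrix (Prod.map Fin.castSucc id) id))
    (U1 U2 V1 V2 : Matrix (Fin L) (Fin L) ℂ)
    (hU1 : U1ᴴ * U1 = 1) (hU2 : U2ᴴ * U2 = 1) (hV1 : V1ᴴ * V1 = 1) (hV2 : V2ᴴ * V2 = 1)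
    (cs sn : Fin L → ℝ)
    (hcs : ∀ i, 0 ≤ cs i) (hsn : ∀ i, 0 ≤ sn i)
    (hpyth : ∀ i, cs i ^ 2 + sn i ^ 2 = 1)
    (hQ11 : S.Q11 = U1 * Matrix.diagonal (fun i => (cs i : ℂ)) * V1ᴴ)
    (hQ12 : S.Q12 = U1 * Matrix.diagonal (fun i => (sn i : ℂ)) * V2ᴴ)
    (hQ21 : S.Q21 = U2 * Matrix.diagonal (fun i => (sn i : ℂ)) * V1ᴴ)
    (hQ22 : S.Q22 = -(U2 * Matrix.diagonal (fun i => (cs i : ℂ)) * V2ᴴ))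
    (Mh Y2 : Matrix (Fin L) (Fin L) ℂ)
    (hMh_unit : Mhᴴ * Mh = 1) (hY2_ut : utL Y2) (hY2_inv : IsUnit Y2)
    (hHhat : S.Hhat = Mh * Y2) (hQhatb : S.Qhatb = Mhᴴ) :
    (X0 + W.submatrix id (Prod.map Fin.castSucc id)
        * ((Hbar.submatrix (Prod.map Fin.castSucc id) id)⁻¹ * (EL (p+1) L * S0)))
      - (X0 + W.submatrix id (Prod.map Fin.castSucc id) * Yj)
    = W.submatrix id (Prod.map Fin.castSucc id)
        * (vcat (-(S.R⁻¹ * S.Z)) (1 : Matrix (Fin L) (Fin L) ℂ)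
            * (Y2⁻¹ * ((Mhᴴ * V1) * (Matrix.diagonal fun i => (sn i : ℂ)) ^ 2
                * (Mhᴴ * V1)ᴴ) * S.Chat)) := by
  classical
  -- abbreviations
  set Wj := W.submatrix id (Prod.map Fin.castSucc id) with hWjdef
  set Hsq := Hbar.submatrix (Prod.map Fin.castSucc id) id with hHsqdef
  set E1 := EL (p+1) L * S0 with hE1def
  set G1 := S.Qbar * E1 with hG1def
  set T1 := topR G1 with hT1def
  set Cd := (Matrix.diagonal fun i => (cs i : ℂ)) with hCddef
  set Sd := (Matrix.diagonal fun i => (sn i : ℂ)) with hSddef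
  -- basic unit facts
  have hMh2 : Mh * Mhᴴ = 1 := mul_eq_one_comm.mp hMh_unit
  have hV1' : V1 * V1ᴴ = 1 := mul_eq_one_comm.mp hV1
  have hU1' : U1 * U1ᴴ = 1 := mul_eq_one_comm.mp hU1
  have hRdet : IsUnit S.R.det := (Matrix.isUnit_iff_isUnit_det _).mp S.R_inv
  have hNdet : IsUnit S.N.det := (Matrix.isUnit_iff_isUnit_det _).mp S.N_inv
  have hY2det : IsUnit Y2.det := (Matrix.isUnit_iff_isUnit_det _).mp hY2_inv
  have hHhdet : IsUnit S.Hhat.det := by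
    rw [hHhat]
    exact (Matrix.isUnit_iff_isUnit_det _).mp ((isUnit_of_mul_one hMh2).mul hY2_inv)
  have hHsqdet : IsUnit Hsq.det := (Matrix.isUnit_iff_isUnit_det _).mp hHinv
  have hCt : S.Ct = botR G1 := by ext a b; rfl
  -- step 1 : Qbar * Hsq = twoBlock R Z Hhat
  have hHbar_rows : Hbar.submatrix (eqv (p+1) L) id = fromRows Hsq (botR Hbar) := by
    rw [submatrix_eqv]; rfl
  have step1 : (fromBlocks S.Qbar 0 0 (1 : Matrix (Fin L) (Fin L) ℂ)) * fromRows Hsq (botR Hbar)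
      = (threeBlock S.R S.Z S.Hhat S.Hsub).submatrix (eqv (p+1) L) id := by
    rw [← extendOne_eqv, ← hHbar_rows, Matrix.submatrix_mul_equiv, S.qr_split]
  have hQH : S.Qbar * Hsq = twoBlock S.R S.Z S.Hhat := by
    have h := step1
    rw [fb_mul_fr, submatrix_eqv, topR_threeBlock] at h
    have h1 := congrArg Matrix.toRows₁ h
    simpa [Matrix.toRows₁_fromRows] using h1
  -- step 2 : block relations from qr_full
  have hTT : trailingTwo (m := p) S.Q11 S.Q12 S.Q21 S.Q22 * threeBlock S.R S.Z S.Hhat S.Hsub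
      = threeBlock S.R S.Z S.N 0 := by
    rw [← S.qr_split]; exact S.qr_full
  have hblocks : (fromBlocks (1 : Matrix (Fin p × Fin L) (Fin p × Fin L) ℂ) 0 0 (fromBlocks S.Q11 S.Q12 S.Q21 S.Q22)) *
      (fromBlocks S.R S.Z 0 (fromRows S.Hhat S.Hsub)) = fromBlocks S.R S.Z 0 (fromRows S.N 0) := by
    rw [← trailingTwo_eqv, ← threeBlock_eqv S.R S.Z S.Hhat S.Hsub,
      Matrix.submatrix_mul_equiv, hTT, threeBlock_eqv]
  have h22 : (fromBlocks S.Q11 S.Q12 S.Q21 S.Q22) * fromRows S.Hhat S.Hsub = fromRows S.N 0 := by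
    have h := congrArg Matrix.toBlocks₂₂ hblocks
    rw [Matrix.fromBlocks_multiply] at h
    simpa [Matrix.toBlocks_fromBlocks₂₂] using h
  rw [fb_mul_fr] at h22
  have hN : S.Q11 * S.Hhat + S.Q12 * S.Hsub = S.N := by
    have h := congrArg Matrix.toRows₁ h22
    simpa [Matrix.toRows₁_fromRows] using h
  have hZr : S.Q21 * S.Hhat + S.Q22 * S.Hsub = 0 := by
    have h := congrArg Matrix.toRows₂ h22
    simpa [Matrix.toRows₂_fromRows] using h
  -- unitarity of the accumulated transformation
  have hExt_unit : (extendOne S.Qbar)ᴴ * extendOne S.Qbar = 1 := by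
    have he : extendOne S.Qbar
        = (fromBlocks S.Qbar 0 0 1).submatrix (eqv (p+1) L).symm (eqv (p+1) L).symm :=
      moveLR _ _ (extendOne_eqv S.Qbar)
    rw [he, Matrix.conjTranspose_submatrix, Matrix.submatrix_mul_equiv,
      Matrix.fromBlocks_conjTranspose, Matrix.fromBlocks_multiply]
    simp [S.Qbar_unit]
  have hGu : (trailingTwo (m := p) S.Q11 S.Q12 S.Q21 S.Q22 * extendOne S.Qbar)ᴴ *
      (trailingTwo (m := p) S.Q11 S.Q12 S.Q21 S.Q22 * extendOne S.Qbar) = 1 := by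
    rw [Matrix.conjTranspose_mul, Matrix.mul_assoc, cancel_left S.Qj_unit]
    exact hExt_unit
  have hGH : (trailingTwo (m := p) S.Q11 S.Q12 S.Q21 S.Q22 * extendOne S.Qbar) * Hbar
      = stackZero (twoBlock S.R S.Z S.N) := by
    rw [Matrix.mul_assoc, S.qr_split, hTT, threeBlock_zero]
  -- the transformed right-hand side
  have hT0s : (EL (p+2) L * S0).submatrix (eqv (p+1) L) id = fromRows E1 0 := by
    ext x c
    rcases x with s | a
    · show (EL (p+2) L * S0) (s.1.castSucc, s.2) c = E1 s c
      rw [ELS0_apply, hE1def, ELS0_apply]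
      simp
    · show (EL (p+2) L * S0) (Fin.last (p+1), a) c = (0 : Matrix (Fin L) (Fin L) ℂ) a c
      rw [ELS0_apply]
      simp
  have hEQT : (extendOne S.Qbar * (EL (p+2) L * S0)).submatrix (eqv (p+1) L) id
      = fromRows G1 0 := by
    calc (extendOne S.Qbar * (EL (p+2) L * S0)).submatrix (eqv (p+1) L) id
        = (extendOne S.Qbar).submatrix (eqv (p+1) L) (eqv (p+1) L)
          * (EL (p+2) L * S0).submatrix (eqv (p+1) L) id :=
          (Matrix.submatrix_mul_equiv _ _ _ _ _).symm
      _ = fromBlocks S.Qbar 0 0 (1 : Matrix (Fin L) (Fin L) ℂ)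
            * fromRows E1 (0 : Matrix (Fin L) (Fin L) ℂ) := by rw [extendOne_eqv, hT0s]
      _ = fromRows G1 0 := by
          rw [fb_mul_fr]
          simp only [Matrix.zero_mul, Matrix.mul_zero, add_zero, zero_add]
          rfl
  have hGTs : ((trailingTwo (m := p) S.Q11 S.Q12 S.Q21 S.Q22 * extendOne S.Qbar)
        * (EL (p+2) L * S0)).submatrix (e3 p L) id
      = fromRows T1 (fromRows S.C (S.Q21 * S.Ct)) := by
    have hinner : (extendOne S.Qbar * (EL (p+2) L * S0)).submatrix (e3 p L) id
        = fromRows T1 (fromRows S.Ct 0) := by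
      rw [moveL _ hEQT, Matrix.submatrix_submatrix]
      ext x c
      rcases x with s | (a | a)
      · show (fromRows G1 0) ((eqv (p+1) L).symm (e3 p L (Sum.inl s))) c
            = fromRows T1 (fromRows S.Ct 0) (Sum.inl s) c
        rw [e3_inl,
          show ((s.1.castSucc.castSucc : Fin (p+2)), s.2)
              = (((s.1.castSucc : Fin (p+1))).castSucc, s.2) from rfl,
          eqv_symm_castSucc]
        rfl
      · show (fromRows G1 0) ((eqv (p+1) L).symm (e3 p L (Sum.inr (Sum.inl a)))) c
            = fromRows T1 (fromRows S.Ct 0) (Sum.inr (Sum.inl a)) c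
        rw [e3_inr_inl, eqv_symm_castSucc]
        rfl
      · show (fromRows G1 0) ((eqv (p+1) L).symm (e3 p L (Sum.inr (Sum.inr a)))) c
            = fromRows T1 (fromRows S.Ct 0) (Sum.inr (Sum.inr a)) c
        rw [e3_inr_inr, eqv_symm_last]
        rfl
    rw [Matrix.mul_assoc]
    calc (trailingTwo (m := p) S.Q11 S.Q12 S.Q21 S.Q22
          * (extendOne S.Qbar * (EL (p+2) L * S0))).submatrix (e3 p L) id
        = (trailingTwo (m := p) S.Q11 S.Q12 S.Q21 S.Q22).submatrix (e3 p L) (e3 p L)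
          * (extendOne S.Qbar * (EL (p+2) L * S0)).submatrix (e3 p L) id :=
          (Matrix.submatrix_mul_equiv _ _ _ _ _).symm
      _ = fromBlocks (1 : Matrix (Fin p × Fin L) (Fin p × Fin L) ℂ) 0 0
            (fromBlocks S.Q11 S.Q12 S.Q21 S.Q22)
          * fromRows T1 (fromRows S.Ct (0 : Matrix (Fin L) (Fin L) ℂ)) := by rw [trailingTwo_eqv, hinner]
      _ = fromRows T1 (fromRows S.C (S.Q21 * S.Ct)) := by
          rw [fb_mul_fr, fb_mul_fr]
          simp only [Matrix.one_mul, Matrix.zero_mul, Matrix.mul_zero, add_zero, zero_add]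
          rfl
  have hGTm : (trailingTwo (m := p) S.Q11 S.Q12 S.Q21 S.Q22 * extendOne S.Qbar)
        * (EL (p+2) L * S0)
      = (fromRows T1 (fromRows S.C (S.Q21 * S.Ct))).submatrix (e3 p L).symm id :=
    moveL _ hGTs
  have hTopGT : topR ((trailingTwo (m := p) S.Q11 S.Q12 S.Q21 S.Q22 * extendOne S.Qbar)
      * (EL (p+2) L * S0)) = vcat T1 S.C := by
    rw [hGTm]
    ext ⟨r1, r2⟩ c
    show (fromRows T1 (fromRows S.C (S.Q21 * S.Ct)))
        ((e3 p L).symm ((r1.castSucc : Fin (p+2)), r2)) c = vcat T1 S.C (r1, r2) c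
    by_cases h : (r1 : ℕ) < p
    · have h1 : ((⟨(r1 : ℕ), h⟩ : Fin p).castSucc) = r1 := by ext; simp
      rw [← h1, e3_symm_inl]
      simp only [fromRows, of_apply, Sum.elim_inl, vcat]
      rw [dif_pos (show (((⟨(r1 : ℕ), h⟩ : Fin p).castSucc : Fin (p+1)) : ℕ) < p
        from (⟨(r1 : ℕ), h⟩ : Fin p).isLt)]
      simp
      rfl
    · have h1 : r1 = Fin.last p := by ext; simp only [Fin.val_last]; omega
      rw [h1, e3_symm_mid]
      simp only [fromRows, of_apply, Sum.elim_inr, Sum.elim_inl, vcat]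
      rw [dif_neg (by simp)]
      rfl
  have hBotGT : botR ((trailingTwo (m := p) S.Q11 S.Q12 S.Q21 S.Q22 * extendOne S.Qbar)
      * (EL (p+2) L * S0)) = S.Q21 * S.Ct := by
    rw [hGTm]
    ext a c
    show (fromRows T1 (fromRows S.C (S.Q21 * S.Ct)))
        ((e3 p L).symm (Fin.last (p+1), a)) c = (S.Q21 * S.Ct) a c
    rw [e3_symm_bot]
    rfl
  -- stackZero multiplication
  have hSZ : ∀ Y : Matrix (Fin (p+1) × Fin L) (Fin L) ℂ,
      stackZero (twoBlock S.R S.Z S.N) * Y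
        = (fromRows (twoBlock S.R S.Z S.N * Y) 0).submatrix (eqv (p+1) L).symm id := by
    intro Y
    rw [moveL _ (stackZero_eqv (twoBlock S.R S.Z S.N)), submatrix_rows_mul, fromRows_mul,
      Matrix.zero_mul]
  -- the key least-squares decomposition
  have key : ∀ Y : Matrix (Fin (p+1) × Fin L) (Fin L) ℂ,
      frobSq (Hbar * Y - EL (p+2) L * S0)
        = frobSq (twoBlock S.R S.Z S.N * Y - vcat T1 S.C) + frobSq (S.Q21 * S.Ct) := by
    intro Y
    rw [← frobSq_unitary _ hGu (Hbar * Y - EL (p+2) L * S0), Matrix.mul_sub,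
      ← Matrix.mul_assoc, hGH, frobSq_split]
    congr 1
    · rw [topR_sub, hSZ Y, topR_fromRows, hTopGT]
    · rw [botR_sub, hSZ Y, botR_fromRows, hBotGT, zero_sub, frobSq_neg]
  -- the GMRES iterate
  set nb := S.N⁻¹ * S.C with hnbdef
  set YG := vcat (S.R⁻¹ * (T1 - S.Z * nb)) nb with hYGdef
  have hRbYG : twoBlock S.R S.Z S.N * YG = vcat T1 S.C := by
    rw [hYGdef, twoBlock_mul_vcat, Matrix.mul_nonsing_inv_cancel_left _ _ hRdet,
      sub_add_cancel, hnbdef, Matrix.mul_nonsing_inv_cancel_left _ _ hNdet]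
  have hYGj : YG = Yj := by
    refine hYj.2 YG fun Y'' => ?_
    rw [key YG, hRbYG, sub_self]
    refine le_of_le_of_eq ?_ (key Y'').symm
    simp only [frobSq_zero, zero_add]
    exact le_add_of_nonneg_left (frobSq_nonneg _)
  -- the FOM iterate
  set hbv := S.Hhat⁻¹ * S.Ct with hbvdef
  set YF := vcat (S.R⁻¹ * (T1 - S.Z * hbv)) hbv with hYFdef
  have hRhYF : twoBlock S.R S.Z S.Hhat * YF = vcat T1 S.Ct := by
    rw [hYFdef, twoBlock_mul_vcat, Matrix.mul_nonsing_inv_cancel_left _ _ hRdet,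
      sub_add_cancel, hbvdef, Matrix.mul_nonsing_inv_cancel_left _ _ hHhdet]
  have hG1v : vcat T1 S.Ct = G1 := by
    rw [hT1def, hCt]; exact (eq_vcat G1).symm
  have hHsqYF : Hsq * YF = E1 := by
    apply lcancel S.Qbar_unit
    calc S.Qbar * (Hsq * YF) = (S.Qbar * Hsq) * YF := (Matrix.mul_assoc _ _ _).symm
      _ = vcat T1 S.Ct := by rw [hQH, hRhYF]
      _ = S.Qbar * E1 := by rw [hG1v, hG1def]
  have hFOM : Hsq⁻¹ * E1 = YF := by
    rw [← hHsqYF, Matrix.nonsing_inv_mul_cancel_left _ _ hHsqdet]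
  -- the L×L core identity
  have hpyth' : Cd * Cd + Sd * Sd = 1 := by
    rw [hCddef, hSddef, Matrix.diagonal_mul_diagonal, Matrix.diagonal_mul_diagonal,
      Matrix.diagonal_add]
    rw [show (fun i => (cs i : ℂ) * (cs i : ℂ) + (sn i : ℂ) * (sn i : ℂ)) = fun _ => (1 : ℂ) by
      funext i
      have h := hpyth i
      have h2 : ((cs i : ℂ) * (cs i : ℂ) + (sn i : ℂ) * (sn i : ℂ))
          = ((cs i ^ 2 + sn i ^ 2 : ℝ) : ℂ) := by push_cast; ring
      rw [h2, h]; norm_num]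
    exact Matrix.diagonal_one
  have hPunit : IsUnit (V1ᴴ * (Mh * Y2)) :=
    (isUnit_of_mul_one hV1).mul ((isUnit_of_mul_one hMh2).mul hY2_inv)
  have h1 : Sd * (V1ᴴ * (Mh * Y2)) = Cd * (V2ᴴ * S.Hsub) := by
    apply lcancel hU2
    have h := hZr
    rw [hQ21, hQ22, hHhat] at h
    rw [neg_mul, add_neg_eq_zero] at h
    simpa only [Matrix.mul_assoc] using h
  have hN' : S.N = U1 * (Cd * (V1ᴴ * (Mh * Y2)) + Sd * (V2ᴴ * S.Hsub)) := by
    have h := hN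
    rw [hQ11, hQ12, hHhat] at h
    rw [← h, Matrix.mul_add]
    simp only [Matrix.mul_assoc]
  have hcomm : Cd * Sd = Sd * Cd := by
    rw [hCddef, hSddef, Matrix.diagonal_mul_diagonal, Matrix.diagonal_mul_diagonal,
      show (fun i => (cs i : ℂ) * (sn i : ℂ)) = (fun i => (sn i : ℂ) * (cs i : ℂ)) from
        funext fun i => mul_comm _ _]
  have hCdP : Cd * (U1ᴴ * S.N) = V1ᴴ * (Mh * Y2) := by
    rw [hN', cancel_left hU1, Matrix.mul_add, ← Matrix.mul_assoc Cd Cd,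
      ← Matrix.mul_assoc Cd Sd, hcomm, Matrix.mul_assoc Sd Cd, ← h1,
      ← Matrix.mul_assoc Sd Sd, ← Matrix.add_mul, hpyth', Matrix.one_mul]
  have hCdunit : IsUnit Cd.det := by
    have h : IsUnit (Cd * (U1ᴴ * S.N)).det := by
      rw [hCdP]; exact (Matrix.isUnit_iff_isUnit_det _).mp hPunit
    rw [Matrix.det_mul] at h
    exact isUnit_of_mul_isUnit_left h
  have hcs0 : ∀ i, (cs i : ℂ) ≠ 0 := by
    intro i h0
    rw [hCddef, Matrix.det_diagonal] at hCdunit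
    exact hCdunit.ne_zero (Finset.prod_eq_zero (Finset.mem_univ i) h0)
  have hCdi : Cd * Matrix.diagonal (fun i => (cs i : ℂ)⁻¹) = 1 := by
    rw [hCddef, Matrix.diagonal_mul_diagonal,
      show (fun i => (cs i : ℂ) * (cs i : ℂ)⁻¹) = fun _ => (1 : ℂ) from
        funext fun i => mul_inv_cancel₀ (hcs0 i), Matrix.diagonal_one]
  have hCdi' : Matrix.diagonal (fun i => (cs i : ℂ)⁻¹) * Cd = 1 :=
    mul_eq_one_comm.mp hCdi
  have hU1N : U1ᴴ * S.N = Matrix.diagonal (fun i => (cs i : ℂ)⁻¹) * (V1ᴴ * (Mh * Y2)) := by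
    rw [← hCdP, cancel_left hCdi']
  have hNeq : S.N = U1 * (Matrix.diagonal (fun i => (cs i : ℂ)⁻¹) * (V1ᴴ * (Mh * Y2))) := by
    rw [← hU1N, cancel_left hU1']
  have hNright : S.N * (Y2⁻¹ * (Mhᴴ * (V1 * (Cd * U1ᴴ)))) = 1 := by
    rw [hNeq]
    simp only [Matrix.mul_assoc]
    rw [Matrix.mul_nonsing_inv_cancel_left _ _ hY2det, cancel_left hMh2, cancel_left hV1,
      cancel_left hCdi']
    exact hU1'
  have hNinv : S.N⁻¹ = Y2⁻¹ * (Mhᴴ * (V1 * (Cd * U1ᴴ))) := Matrix.inv_eq_right_inv hNright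
  have hHhinv : S.Hhat⁻¹ = Y2⁻¹ * Mhᴴ := by
    apply Matrix.inv_eq_right_inv
    rw [hHhat]
    simp only [Matrix.mul_assoc]
    rw [Matrix.mul_nonsing_inv_cancel_left _ _ hY2det]
    exact hMh2
  have hkey2 : ∀ X : Matrix (Fin L) (Fin L) ℂ, X - Cd * (Cd * X) = Sd * (Sd * X) := by
    intro X
    calc X - Cd * (Cd * X) = (1 - Cd * Cd) * X := by
          rw [Matrix.sub_mul, Matrix.one_mul, Matrix.mul_assoc]
      _ = (Sd * Sd) * X := by
          rw [show (1 : Matrix (Fin L) (Fin L) ℂ) - Cd * Cd = Sd * Sd from by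
            rw [← hpyth']; abel]
      _ = Sd * (Sd * X) := Matrix.mul_assoc _ _ _
  have hCh : S.Chat = Mhᴴ * S.Ct := by
    show S.Qhatb * S.Ct = _
    rw [hQhatb]
  have hdiff : hbv - nb = Y2⁻¹ * ((Mhᴴ * V1) * Sd ^ 2 * (Mhᴴ * V1)ᴴ) * S.Chat := by
    rw [hbvdef, hnbdef, hHhinv, hNinv, show S.C = S.Q11 * S.Ct from rfl, hQ11, hCh, sq,
      Matrix.conjTranspose_mul, Matrix.conjTranspose_conjTranspose]
    simp only [Matrix.mul_assoc, cancel_left hU1, cancel_left hMh2]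
    rw [← hkey2]
    simp only [Matrix.mul_sub, cancel_left hV1']
  -- assembly
  rw [add_sub_add_left_eq_sub, hFOM, ← hYGj, ← Matrix.mul_sub]
  congr 1
  have htop : S.R⁻¹ * (T1 - S.Z * hbv) - S.R⁻¹ * (T1 - S.Z * nb)
      = -(S.R⁻¹ * S.Z) * (hbv - nb) := by
    rw [← Matrix.mul_sub]
    have h9 : (T1 - S.Z * hbv) - (T1 - S.Z * nb) = -(S.Z * (hbv - nb)) := by
      rw [Matrix.mul_sub]; abel
    rw [h9, Matrix.mul_neg, Matrix.neg_mul, Matrix.mul_assoc]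
  rw [hYFdef, hYGdef, vcat_sub, vcat_mul, Matrix.one_mul, htop, hdiff]

end
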